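/- The number of spanning trees of the complete graph on p ≥ 1 labeled vertices is p^{p-2}. -/

import Mathlib

set_option linter.unusedSectionVars false
open Function Finset

namespace CayleyAux

variable {S : Type*} [Fintype S] [LinearOrder S]

/-- `f` is the parent map of a rooted tree with root `r`. -/
def IsRT (r : S) (f : S → S) : Prop := f r = r ∧ ∀ x, ∃ k, f^[k] x = r

lemma exists_iterate_mem_periodicPts (g : S → S) (x : S) :
    ∃ m, g^[m] x ∈ periodicPts g := by
  obtain ⟨i, j, hij, h⟩ := Finite.exists_ne_map_eq_of_infinite (fun n : ℕ => g^[n] x)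
  rcases Ne.lt_or_gt hij with h' | h'
  · exact ⟨i, mk_mem_periodicPts (Nat.sub_pos_of_lt h') (by
      show g^[j - i] (g^[i] x) = g^[i] x
      rw [← Function.iterate_add_apply, Nat.sub_add_cancel h'.le, h])⟩
  · exact ⟨j, mk_mem_periodicPts (Nat.sub_pos_of_lt h') (by
      show g^[i - j] (g^[j] x) = g^[j] x
      rw [← Function.iterate_add_apply, Nat.sub_add_cancel h'.le, ← h])⟩

lemma IsRT.not_periodic {r : S} {f : S → S} (hf : IsRT r f) {x : S}
    (hx : x ∈ periodicPts f) : x = r := by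
  obtain ⟨n, hn, hper⟩ := mem_periodicPts.1 hx
  obtain ⟨k, hk⟩ := hf.2 x
  have h1 : ∀ m, f^[m * n] x = x := fun m => by
    induction m with
    | zero => simp
    | succ m ih =>
      rw [Nat.succ_mul, Function.iterate_add_apply]
      rw [show f^[n] x = x from hper]
      exact ih
  have h2 : f^[k * n] x = x := h1 k
  have hkn : k ≤ k * n := Nat.le_mul_of_pos_right k hn
  calc x = f^[k * n] x := (h2).symm
    _ = f^[k * n - k] (f^[k] x) := by rw [← Function.iterate_add_apply, Nat.sub_add_cancel hkn]
    _ = r := by rw [hk]; exact Function.iterate_fixed hf.1 _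

lemma IsRT.apply_ne {r : S} {f : S → S} (hf : IsRT r f) {x : S} (hx : x ≠ r) : f x ≠ x := by
  intro h
  exact hx (hf.not_periodic (mk_mem_periodicPts one_pos (by show f^[1] x = x; simpa using h)))

/-- orbit injectivity -/
lemma IsRT.orbit_injOn {r : S} {f : S → S} (hf : IsRT r f) (a : S) {t : ℕ}
    (ht : f^[t] a = r) (htmin : ∀ j, f^[j] a = r → t ≤ j) :
    ∀ i ≤ t, ∀ j ≤ t, f^[i] a = f^[j] a → i = j := by
  have key : ∀ i j, i < j → j ≤ t → f^[i] a = f^[j] a → False := by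
    intro i j hij hjt heq
    set d := j - i with hd
    have hd0 : 0 < d := Nat.sub_pos_of_lt hij
    have hstep : f^[d + i] a = f^[i] a := by
      rw [hd, Nat.sub_add_cancel hij.le]; exact heq.symm
    have hrep : ∀ m, f^[m * d + i] a = f^[i] a := by
      intro m
      induction m with
      | zero => simp
      | succ m ih =>
        have : (m + 1) * d + i = d + (m * d + i) := by ring
        rw [this, Function.iterate_add_apply, ih, ← Function.iterate_add_apply, hstep]
    have hbig : t ≤ t * d + i := by
      calc t ≤ t * d := Nat.le_mul_of_pos_right t hd0
        _ ≤ t * d + i := Nat.le_add_right _ _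
    have : f^[t * d + i] a = r := by
      obtain ⟨s, hs⟩ := Nat.exists_eq_add_of_le hbig
      rw [hs, Nat.add_comm t s, Function.iterate_add_apply, ht]
      exact Function.iterate_fixed hf.1 _
    rw [hrep t] at this
    have := htmin i this
    omega
  intro i hi j hj heq
  rcases lt_trichotomy i j with h | h | h
  · exact absurd heq (fun heq => key i j h hj heq)
  · exact h
  · exact absurd heq.symm (fun heq => key j i h hi heq)

/-- if a finset is mapped injectively into itself by `g`, its points are periodic. -/
lemma mem_periodicPts_of_finset_maps {M : Finset S} {g : S → S}
    (hmaps : ∀ x ∈ M, g x ∈ M) (hinj : ∀ x ∈ M, ∀ y ∈ M, g x = g y → x = y)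
    {x : S} (hx : x ∈ M) : x ∈ periodicPts g := by
  classical
  let g' : ↥M → ↥M := fun y => ⟨g y, hmaps y y.2⟩
  have hg'inj : Function.Injective g' := by
    intro y z h
    exact Subtype.ext (hinj y y.2 z z.2 (congrArg Subtype.val h))
  have hg'bij : Function.Bijective g' := Finite.injective_iff_bijective.1 hg'inj
  let σ : Equiv.Perm ↥M := Equiv.ofBijective g' hg'bij
  have hiter : ∀ (m : ℕ) (y : ↥M), g^[m] (y : S) = ((σ ^ m) y : S) := by
    intro m
    induction m with
    | zero => intro y; simp
    | succ m ih =>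
      intro y
      rw [Function.iterate_succ_apply', ih y, pow_succ']
      show g _ = ((σ * σ ^ m) y : S)
      rw [Equiv.Perm.mul_apply]
      rfl
  set n := Fintype.card (Equiv.Perm ↥M) with hn
  have hnpos : 0 < n := Fintype.card_pos
  have hσn : σ ^ n = 1 := pow_card_eq_one
  refine mk_mem_periodicPts hnpos ?_
  show g^[n] x = x
  have := hiter n ⟨x, hx⟩
  rw [hσn] at this
  simpa using this

section Phi

variable [Nonempty S]

/-- The finset of periodic points of `g`. -/
noncomputable def pMf (g : S → S) : Finset S := (Set.toFinite (periodicPts g)).toFinset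

lemma mem_pMf {g : S → S} {x : S} : x ∈ pMf g ↔ x ∈ periodicPts g :=
  Set.Finite.mem_toFinset _

lemma pMf_nonempty (g : S → S) : (pMf g).Nonempty := by
  obtain ⟨x⟩ := ‹Nonempty S›
  obtain ⟨m, hm⟩ := exists_iterate_mem_periodicPts g x
  exact ⟨_, mem_pMf.2 hm⟩

noncomputable def kk (g : S → S) : ℕ := (pMf g).card

lemma kk_pos (g : S → S) : 0 < kk g := Finset.card_pos.2 (pMf_nonempty g)

noncomputable def ee (g : S → S) : Fin (kk g) ≃o ↥(pMf g) :=
  (pMf g).orderIsoOfFin rfl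

lemma g_maps_pMf {g : S → S} {x : S} (hx : x ∈ pMf g) : g x ∈ pMf g :=
  mem_pMf.2 ((bijOn_periodicPts (f := g)).mapsTo (mem_pMf.1 hx))

lemma g_injOn_pMf {g : S → S} {x y : S} (hx : x ∈ pMf g) (hy : y ∈ pMf g)
    (h : g x = g y) : x = y :=
  (bijOn_periodicPts (f := g)).injOn (mem_pMf.1 hx) (mem_pMf.1 hy) h

/-- The enumeration of periodic points in "cyclic-successor order". -/
noncomputable def iotae (g : S → S) : Fin (kk g) ≃ ↥(pMf g) :=
  Equiv.ofBijective (fun i => (⟨g (ee g i), g_maps_pMf (ee g i).2⟩ : ↥(pMf g)))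
    (by
      refine (Fintype.bijective_iff_injective_and_card _).2 ⟨?_, by convert Fintype.card_congr (ee g).toEquiv⟩
      intro i j h
      have := g_injOn_pMf (ee g i).2 (ee g j).2 (congrArg Subtype.val h)
      exact (ee g).injective (Subtype.ext this))

lemma iotae_apply (g : S → S) (i : Fin (kk g)) :
    (iotae g i : S) = g (ee g i) := rfl

noncomputable def phiF (g : S → S) : S → S := fun x =>
  if hx : x ∈ pMf g then
    (if hi : ((iotae g).symm ⟨x, hx⟩ : ℕ) + 1 < kk g then
      ((iotae g ⟨((iotae g).symm ⟨x, hx⟩ : ℕ) + 1, hi⟩ : ↥(pMf g)) : S) else x)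
  else g x

noncomputable def phiA (g : S → S) : S := (iotae g ⟨0, kk_pos g⟩ : S)

noncomputable def phiR (g : S → S) : S := (iotae g ⟨kk g - 1, by have := kk_pos g; omega⟩ : S)

lemma phiF_of_not_mem {g : S → S} {x : S} (hx : x ∉ pMf g) : phiF g x = g x :=
  dif_neg hx

lemma phiF_iotae (g : S → S) (i : Fin (kk g)) :
    phiF g (iotae g i : S) =
      if h : (i : ℕ) + 1 < kk g then (iotae g ⟨(i : ℕ) + 1, h⟩ : S) else (iotae g i : S) := by
  have hx : (iotae g i : S) ∈ pMf g := (iotae g i).2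
  rw [phiF, dif_pos hx]
  have h2 : (⟨(iotae g i : S), hx⟩ : ↥(pMf g)) = iotae g i := Subtype.coe_eta _ _
  rw [h2, Equiv.symm_apply_apply]

lemma iotae_congr (g : S → S) {a b : ℕ} (ha : a < kk g) (hb : b < kk g) (h : a = b) :
    (iotae g ⟨a, ha⟩ : S) = (iotae g ⟨b, hb⟩ : S) := by subst h; rfl

lemma phiF_iterate (g : S → S) (j : ℕ) (i : Fin (kk g)) :
    (phiF g)^[j] (iotae g i : S) =
      (iotae g ⟨min ((i : ℕ) + j) (kk g - 1), by have := kk_pos g; omega⟩ : S) := by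
  induction j with
  | zero =>
    simp only [Function.iterate_zero, id_eq]
    exact (iotae_congr g _ i.2 (by have := i.2; omega)).symm
  | succ j ih =>
    rw [Function.iterate_succ_apply', ih, phiF_iotae]
    have hk := kk_pos g
    by_cases h : (i : ℕ) + j < kk g - 1
    · have h2 : min ((i : ℕ) + j) (kk g - 1) + 1 < kk g := by omega
      rw [dif_pos h2]
      exact iotae_congr g _ _
        (show min ((i : ℕ) + j) (kk g - 1) + 1 = min ((i : ℕ) + (j + 1)) (kk g - 1) by omega)
    · have h2 : ¬ (min ((i : ℕ) + j) (kk g - 1) + 1 < kk g) := by omega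
      rw [dif_neg h2]
      exact iotae_congr g _ _ (by omega)

lemma phiF_reach_of_mem {g : S → S} {x : S} (hx : x ∈ pMf g) :
    ∃ m, (phiF g)^[m] x = phiR g := by
  obtain ⟨i, hi⟩ := (iotae g).surjective ⟨x, hx⟩
  refine ⟨kk g - 1, ?_⟩
  have : x = (iotae g i : S) := by rw [hi]
  rw [this, phiF_iterate]
  have hk := kk_pos g
  exact iotae_congr g _ _ (by omega)

lemma isRT_phi (g : S → S) : IsRT (phiR g) (phiF g) := by
  constructor
  · rw [phiR, phiF_iotae]
    have hk := kk_pos g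
    rw [dif_neg (by simp; omega)]
  · intro x
    by_cases hx : x ∈ pMf g
    · exact phiF_reach_of_mem hx
    · -- iterate g until reaching pMf
      have hex : ∃ m, g^[m] x ∈ pMf g := by
        obtain ⟨m, hm⟩ := exists_iterate_mem_periodicPts g x
        exact ⟨m, mem_pMf.2 hm⟩
      classical
      set m := Nat.find hex with hm
      have hmem : g^[m] x ∈ pMf g := Nat.find_spec hex
      have hagree : ∀ j ≤ m, (phiF g)^[j] x = g^[j] x := by
        intro j hj
        induction j with
        | zero => simp
        | succ j ihj =>
          rw [Function.iterate_succ_apply', Function.iterate_succ_apply',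
            ihj (by omega)]
          exact phiF_of_not_mem (Nat.find_min hex (by omega))
      obtain ⟨m', hm'⟩ := phiF_reach_of_mem hmem
      refine ⟨m' + m, ?_⟩
      rw [Function.iterate_add_apply, hagree m le_rfl, hm']

end Phi

section Psi

variable [Nonempty S]

/-- helper: large returns of periodic points -/
lemma iterate_mul_left_eq_self {g : S → S} {x : S} {n : ℕ} (h : g^[n] x = x) (m : ℕ) :
    g^[m * n] x = x := by
  induction m with
  | zero => simp
  | succ m ih =>
    rw [Nat.succ_mul, Function.iterate_add_apply, h]
    exact ih

noncomputable def psiT (a r : S) (f : S → S) (hf : IsRT r f) : ℕ := Nat.find (hf.2 a)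

lemma psiT_spec {a r : S} {f : S → S} (hf : IsRT r f) : f^[psiT a r f hf] a = r :=
  Nat.find_spec (hf.2 a)

lemma psiT_min {a r : S} {f : S → S} (hf : IsRT r f) {j : ℕ} (h : f^[j] a = r) :
    psiT a r f hf ≤ j := Nat.find_min' (hf.2 a) h

noncomputable def pM' (a r : S) (f : S → S) (hf : IsRT r f) : Finset S :=
  (range (psiT a r f hf + 1)).image (fun i => f^[i] a)

lemma mem_pM' {a r : S} {f : S → S} {hf : IsRT r f} {x : S} :
    x ∈ pM' a r f hf ↔ ∃ j ≤ psiT a r f hf, f^[j] a = x := by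
  simp [pM', Nat.lt_succ_iff]

lemma r_mem_pM' {a r : S} {f : S → S} (hf : IsRT r f) : r ∈ pM' a r f hf :=
  mem_pM'.2 ⟨_, le_rfl, psiT_spec hf⟩

lemma card_pM' {a r : S} {f : S → S} (hf : IsRT r f) :
    (pM' a r f hf).card = psiT a r f hf + 1 := by
  rw [pM', Finset.card_image_of_injOn, card_range]
  intro i hi j hj h
  simp only [coe_range, Set.mem_Iio, Nat.lt_succ_iff] at hi hj
  exact hf.orbit_injOn a (psiT_spec hf) (fun j h => psiT_min hf h) i hi j hj h

noncomputable def psiG (a r : S) (f : S → S) (hf : IsRT r f) : S → S := fun x =>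
  if hx : x ∈ pM' a r f hf then
    f^[((((pM' a r f hf)).orderIsoOfFin rfl).symm ⟨x, hx⟩ : ℕ)] a
  else f x

lemma psiG_of_not_mem {a r : S} {f : S → S} {hf : IsRT r f} {x : S}
    (hx : x ∉ pM' a r f hf) : psiG a r f hf x = f x := dif_neg hx

lemma psiG_of_mem {a r : S} {f : S → S} {hf : IsRT r f} {x : S}
    (hx : x ∈ pM' a r f hf) :
    psiG a r f hf x = f^[((((pM' a r f hf)).orderIsoOfFin rfl).symm ⟨x, hx⟩ : ℕ)] a :=
  dif_pos hx

lemma rank_le_psiT {a r : S} {f : S → S} (hf : IsRT r f) {x : S} (hx : x ∈ pM' a r f hf) :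
    ((((pM' a r f hf)).orderIsoOfFin rfl).symm ⟨x, hx⟩ : ℕ) ≤ psiT a r f hf := by
  have h := ((((pM' a r f hf)).orderIsoOfFin rfl).symm ⟨x, hx⟩).2
  have h2 := card_pM' (a := a) hf
  omega

lemma psiG_mem {a r : S} {f : S → S} (hf : IsRT r f) {x : S} (hx : x ∈ pM' a r f hf) :
    psiG a r f hf x ∈ pM' a r f hf := by
  rw [psiG_of_mem hx]
  exact mem_pM'.2 ⟨_, rank_le_psiT hf hx, rfl⟩

lemma psiG_injOn {a r : S} {f : S → S} (hf : IsRT r f) {x y : S}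
    (hx : x ∈ pM' a r f hf) (hy : y ∈ pM' a r f hf)
    (h : psiG a r f hf x = psiG a r f hf y) : x = y := by
  rw [psiG_of_mem hx, psiG_of_mem hy] at h
  have := hf.orbit_injOn a (psiT_spec hf) (fun j h => psiT_min hf h)
    _ (rank_le_psiT hf hx) _ (rank_le_psiT hf hy) h
  have h2 : (((pM' a r f hf)).orderIsoOfFin rfl).symm ⟨x, hx⟩ =
      (((pM' a r f hf)).orderIsoOfFin rfl).symm ⟨y, hy⟩ := Fin.ext this
  have h3 := congrArg (fun t => ((((pM' a r f hf)).orderIsoOfFin rfl) t : S)) h2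
  simpa using h3

/-- periodic points of `psiG` are exactly `pM'`. -/
lemma pMf_psiG {a r : S} {f : S → S} (hf : IsRT r f) :
    pMf (psiG a r f hf) = pM' a r f hf := by
  set g := psiG a r f hf with hg
  ext x
  constructor
  · intro hx
    by_contra hxM
    have hx' : x ∈ periodicPts g := mem_pMf.1 hx
    -- orbit of x enters pM' eventually
    have hex : ∃ m, g^[m] x ∈ pM' a r f hf := by
      by_contra hno
      push_neg at hno
      have hagree : ∀ m, g^[m] x = f^[m] x := by
        intro m
        induction m with
        | zero => simp
        | succ m ih =>
          rw [Function.iterate_succ_apply', Function.iterate_succ_apply', ih]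
          rw [← ih]
          exact psiG_of_not_mem (by rw [ih]; rw [← ih]; exact hno m) |>.trans (by rw [ih])
      obtain ⟨k, hk⟩ := hf.2 x
      have := hno k
      rw [hagree k, hk] at this
      exact this (r_mem_pM' hf)
    classical
    obtain ⟨m, hm⟩ := hex
    have hstays : ∀ i, g^[i] (g^[m] x) ∈ pM' a r f hf := by
      intro i
      induction i with
      | zero => simpa using hm
      | succ i ih =>
        rw [Function.iterate_succ_apply']
        exact psiG_mem hf ih
    obtain ⟨n, hn, hper⟩ := mem_periodicPts.1 hx'
    have hlarge : g^[m * n] x = x := iterate_mul_left_eq_self hper m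
    have hmn : m ≤ m * n := Nat.le_mul_of_pos_right m hn
    have : x ∈ pM' a r f hf := by
      have := hstays (m * n - m)
      rw [← Function.iterate_add_apply, Nat.sub_add_cancel hmn, hlarge] at this
      exact this
    exact hxM this
  · intro hx
    exact mem_pMf.2 (mem_periodicPts_of_finset_maps
      (fun y hy => psiG_mem hf hy) (fun y hy z hz => psiG_injOn hf hy hz) hx)

lemma orderIsoOfFin_symm_congr {s s' : Finset S} (h : s = s') {x : S}
    (hx : x ∈ s) (hx' : x ∈ s') :
    ((s.orderIsoOfFin rfl).symm ⟨x, hx⟩ : ℕ) = ((s'.orderIsoOfFin rfl).symm ⟨x, hx'⟩ : ℕ) := by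
  subst h; rfl

lemma kk_psiG {a r : S} {f : S → S} (hf : IsRT r f) :
    kk (psiG a r f hf) = psiT a r f hf + 1 := by
  rw [kk, pMf_psiG hf, card_pM' hf]

lemma iotae_psiG {a r : S} {f : S → S} (hf : IsRT r f) (j : Fin (kk (psiG a r f hf))) :
    (iotae (psiG a r f hf) j : S) = f^[(j : ℕ)] a := by
  have hx : ((ee (psiG a r f hf) j : ↥(pMf (psiG a r f hf))) : S) ∈ pMf (psiG a r f hf) :=
    (ee _ j).2
  have hx' : ((ee (psiG a r f hf) j) : S) ∈ pM' a r f hf := by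
    rw [← pMf_psiG hf]; exact hx
  rw [iotae_apply, psiG_of_mem hx']
  congr 1
  rw [← orderIsoOfFin_symm_congr (pMf_psiG hf) hx hx']
  show ((ee (psiG a r f hf)).symm ⟨_, hx⟩ : ℕ) = _
  rw [Subtype.coe_eta, OrderIso.symm_apply_apply]

end Psi

section Round

variable [Nonempty S]

lemma phiA_psiG {a r : S} {f : S → S} (hf : IsRT r f) : phiA (psiG a r f hf) = a := by
  rw [phiA, iotae_psiG hf]
  simp

lemma phiR_psiG {a r : S} {f : S → S} (hf : IsRT r f) : phiR (psiG a r f hf) = r := by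
  rw [phiR, iotae_psiG hf]
  have h := kk_psiG (a := a) hf
  have : (kk (psiG a r f hf)) - 1 = psiT a r f hf := by omega
  rw [show ((⟨kk (psiG a r f hf) - 1, by have := kk_pos (psiG a r f hf); omega⟩ :
      Fin (kk (psiG a r f hf))) : ℕ) = psiT a r f hf from this]
  exact psiT_spec hf

lemma phiF_psiG {a r : S} {f : S → S} (hf : IsRT r f) : phiF (psiG a r f hf) = f := by
  funext x
  by_cases hx : x ∈ pMf (psiG a r f hf)
  · have hxval : x = f^[((iotae (psiG a r f hf)).symm ⟨x, hx⟩ : ℕ)] a := by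
      conv_lhs => rw [show x = ((iotae (psiG a r f hf))
        ((iotae (psiG a r f hf)).symm ⟨x, hx⟩) : S) by rw [Equiv.apply_symm_apply]]
      rw [iotae_psiG hf]
    simp only [phiF]
    rw [dif_pos hx]
    by_cases hi : ((iotae (psiG a r f hf)).symm ⟨x, hx⟩ : ℕ) + 1 < kk (psiG a r f hf)
    · rw [dif_pos hi, iotae_psiG hf]
      conv_rhs => rw [hxval]
      rw [← Function.iterate_succ_apply' f]
    · rw [dif_neg hi]
      have h := kk_psiG (a := a) hf
      have hlt := ((iotae (psiG a r f hf)).symm ⟨x, hx⟩).2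
      have : ((iotae (psiG a r f hf)).symm ⟨x, hx⟩ : ℕ) = psiT a r f hf := by omega
      rw [this] at hxval
      rw [hxval, psiT_spec hf, hf.1]
  · rw [phiF_of_not_mem hx]
    rw [pMf_psiG hf] at hx
    exact psiG_of_not_mem hx

lemma phiF_iterate_phiA (g : S → S) (j : ℕ) :
    (phiF g)^[j] (phiA g) =
      (iotae g ⟨min j (kk g - 1), by have := kk_pos g; omega⟩ : S) := by
  rw [phiA, phiF_iterate]
  exact iotae_congr g _ _ (show min (0 + j) (kk g - 1) = min j (kk g - 1) by omega)

lemma phiR_def (g : S → S) :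
    phiR g = (iotae g ⟨kk g - 1, by have := kk_pos g; omega⟩ : S) := rfl

lemma psiT_phi (g : S → S) :
    psiT (phiA g) (phiR g) (phiF g) (isRT_phi g) = kk g - 1 := by
  have hk := kk_pos g
  apply le_antisymm
  · apply psiT_min
    rw [phiF_iterate_phiA, phiR_def]
    exact iotae_congr g _ _ (by omega)
  · have hspec := psiT_spec (isRT_phi g) (a := phiA g)
    rw [phiF_iterate_phiA] at hspec
    have h1 := (iotae g).injective (Subtype.coe_injective (hspec.trans (phiR_def g)))
    have h2 : min (psiT (phiA g) (phiR g) (phiF g) (isRT_phi g)) (kk g - 1) = kk g - 1 :=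
      congrArg Fin.val h1
    omega

lemma pM'_phi (g : S → S) :
    pM' (phiA g) (phiR g) (phiF g) (isRT_phi g) = pMf g := by
  have hk := kk_pos g
  ext x
  rw [mem_pM']
  constructor
  · rintro ⟨j, hj, rfl⟩
    rw [phiF_iterate_phiA]
    exact (iotae g _).2
  · intro hx
    refine ⟨((iotae g).symm ⟨x, hx⟩ : ℕ), ?_, ?_⟩
    · have := ((iotae g).symm ⟨x, hx⟩).2
      rw [psiT_phi]
      omega
    · rw [phiF_iterate_phiA]
      have hlt := ((iotae g).symm ⟨x, hx⟩).2
      have heq : (iotae g ⟨min (((iotae g).symm ⟨x, hx⟩ : ℕ)) (kk g - 1),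
          by omega⟩ : S) = (iotae g ((iotae g).symm ⟨x, hx⟩) : S) := by
        refine congrArg _ (congrArg _ (Fin.ext ?_))
        show min _ _ = _
        omega
      rw [heq, Equiv.apply_symm_apply]

lemma psiG_phi (g : S → S) :
    psiG (phiA g) (phiR g) (phiF g) (isRT_phi g) = g := by
  funext x
  by_cases hx : x ∈ pMf g
  · have hx' : x ∈ pM' (phiA g) (phiR g) (phiF g) (isRT_phi g) := by
      rw [pM'_phi]; exact hx
    rw [psiG_of_mem hx']
    rw [show ((((pM' (phiA g) (phiR g) (phiF g) (isRT_phi g))).orderIsoOfFin rfl).symm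
        ⟨x, hx'⟩ : ℕ) = (((pMf g).orderIsoOfFin rfl).symm ⟨x, hx⟩ : ℕ) from
      orderIsoOfFin_symm_congr (pM'_phi g) hx' hx]
    rw [phiF_iterate_phiA]
    have hlt := (((pMf g).orderIsoOfFin rfl).symm ⟨x, hx⟩).2
    have hk := kk_pos g
    have heq : (iotae g ⟨min ((((pMf g).orderIsoOfFin rfl).symm ⟨x, hx⟩ : ℕ)) (kk g - 1),
        by omega⟩ : S) = (iotae g (((pMf g).orderIsoOfFin rfl).symm ⟨x, hx⟩) : S) := by
      refine congrArg _ (congrArg _ (Fin.ext ?_))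
      show min _ _ = _
      have hcard : kk g = #(pMf g) := rfl
      omega
    rw [heq]
    show (iotae g ((ee g).symm ⟨x, hx⟩) : S) = g x
    rw [iotae_apply, OrderIso.apply_symm_apply]
  · have hx' : x ∉ pM' (phiA g) (phiR g) (phiF g) (isRT_phi g) := by
      rw [pM'_phi]; exact hx
    rw [psiG_of_not_mem hx', phiF_of_not_mem hx]

end Round

section Count

variable [Nonempty S]

noncomputable def joyal : (S → S) ≃ {x : S × S × (S → S) // IsRT x.2.1 x.2.2} where
  toFun g := ⟨(phiA g, phiR g, phiF g), isRT_phi g⟩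
  invFun x := psiG x.1.1 x.1.2.1 x.1.2.2 x.2
  left_inv g := psiG_phi g
  right_inv := by
    rintro ⟨⟨a, r, f⟩, hf⟩
    apply Subtype.ext
    show (phiA _, phiR _, phiF _) = (a, r, f)
    rw [phiA_psiG hf, phiR_psiG hf, phiF_psiG hf]

lemma isRT_conj (c : Equiv.Perm S) {r : S} {f : S → S} (hf : IsRT r f) :
    IsRT (c r) (⇑c ∘ f ∘ ⇑c.symm) := by
  have hs : Function.Semiconj ⇑c f (⇑c ∘ f ∘ ⇑c.symm) := by
    intro x
    show c (f x) = (⇑c ∘ f ∘ ⇑c.symm) (c x)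
    simp
  constructor
  · show c (f (c.symm (c r))) = c r
    simp [hf.1]
  · intro x
    obtain ⟨k, hk⟩ := hf.2 (c.symm x)
    refine ⟨k, ?_⟩
    have h2 := (hs.iterate_right k) (c.symm x)
    simp only [Equiv.apply_symm_apply] at h2
    rw [← h2, hk]

lemma conj_conj (c : Equiv.Perm S) (hc : c.symm = c) (f : S → S) :
    ⇑c ∘ (⇑c ∘ f ∘ ⇑c) ∘ ⇑c = f := by
  funext x
  simp only [Function.comp_apply]
  nth_rewrite 2 [← hc]
  nth_rewrite 3 [← hc]
  simp

noncomputable def vtbEquiv (r0 : S) :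
    {x : S × S × (S → S) // IsRT x.2.1 x.2.2} ≃ (S × S × {f : S → S // IsRT r0 f}) where
  toFun x := (x.1.1, x.1.2.1,
    ⟨⇑(Equiv.swap x.1.2.1 r0) ∘ x.1.2.2 ∘ ⇑(Equiv.swap x.1.2.1 r0), by
      have h := isRT_conj (Equiv.swap x.1.2.1 r0) x.2
      rwa [Equiv.symm_swap, Equiv.swap_apply_left] at h⟩)
  invFun y := ⟨(y.1, y.2.1, ⇑(Equiv.swap y.2.1 r0) ∘ (y.2.2 : S → S) ∘ ⇑(Equiv.swap y.2.1 r0)), by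
    have h := isRT_conj (Equiv.swap y.2.1 r0) y.2.2.2
    rwa [Equiv.symm_swap, Equiv.swap_apply_right] at h⟩
  left_inv := by
    rintro ⟨⟨a, r, f⟩, hf⟩
    apply Subtype.ext
    show (a, r, _) = (a, r, f)
    rw [conj_conj _ (Equiv.symm_swap _ _) f]
  right_inv := by
    rintro ⟨a, r, f, hf⟩
    show (a, r, _) = (a, r, (⟨f, hf⟩ : {f : S → S // IsRT r0 f}))
    refine congrArg _ (congrArg _ (Subtype.ext ?_))
    exact conj_conj _ (Equiv.symm_swap _ _) f

lemma card_isRT (r0 : S) :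
    Fintype.card S * (Fintype.card S * Nat.card {f : S → S // IsRT r0 f}) =
      Fintype.card S ^ Fintype.card S := by
  have h1 : Nat.card (S → S) = Fintype.card S ^ Fintype.card S := by
    rw [Nat.card_eq_fintype_card, Fintype.card_fun]
  rw [← h1, Nat.card_congr (joyal.trans (vtbEquiv r0)), Nat.card_prod, Nat.card_prod,
    Nat.card_eq_fintype_card (α := S)]

end Count

section Graph

open SimpleGraph

/-- The graph associated to a parent function. -/
def graphOf (f : S → S) : SimpleGraph S := SimpleGraph.fromRel (fun x y => f x = y)

lemma graphOf_adj {f : S → S} {x y : S} :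
    (graphOf f).Adj x y ↔ x ≠ y ∧ (f x = y ∨ f y = x) := by
  simp [graphOf, SimpleGraph.fromRel_adj]

variable {z : S}

lemma reachable_graphOf {f : S → S} (hf : IsRT z f) :
    ∀ (k : ℕ) (x : S), f^[k] x = z → (graphOf f).Reachable x z := by
  intro k
  induction k with
  | zero => intro x hx; rw [show x = z from hx]
  | succ k ih =>
    intro x hx
    by_cases hxz : x = z
    · rw [hxz]
    · have hne : x ≠ f x := (hf.apply_ne hxz).symm
      have hadj : (graphOf f).Adj x (f x) := graphOf_adj.2 ⟨hne, Or.inl rfl⟩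
      exact hadj.reachable.trans (ih (f x) (by rw [← Function.iterate_succ_apply]; exact hx))

lemma connected_graphOf {f : S → S} (hf : IsRT z f) : (graphOf f).Connected := by
  have : Nonempty S := ⟨z⟩
  refine ⟨fun x y => ?_⟩
  obtain ⟨k, hk⟩ := hf.2 x
  obtain ⟨l, hl⟩ := hf.2 y
  exact (reachable_graphOf hf k x hk).trans (reachable_graphOf hf l y hl).symm

noncomputable def htf {f : S → S} (hf : IsRT z f) (x : S) : ℕ := Nat.find (hf.2 x)

lemma htf_spec {f : S → S} (hf : IsRT z f) (x : S) : f^[htf hf x] x = z :=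
  Nat.find_spec (hf.2 x)

lemma htf_eq_zero_iff {f : S → S} (hf : IsRT z f) {x : S} : htf hf x = 0 ↔ x = z := by
  constructor
  · intro h
    have := htf_spec hf x
    rw [h] at this
    simpa using this
  · intro h
    subst h
    exact (Nat.find_eq_zero _).2 rfl

lemma htf_apply {f : S → S} (hf : IsRT z f) {x : S} (hx : x ≠ z) :
    htf hf x = htf hf (f x) + 1 := by
  apply le_antisymm
  · apply Nat.find_min' (hf.2 x)
    rw [Function.iterate_succ_apply]
    exact htf_spec hf (f x)
  · have h0 : htf hf x ≠ 0 := fun h => hx ((htf_eq_zero_iff hf).1 h)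
    obtain ⟨m, hm⟩ := Nat.exists_eq_succ_of_ne_zero h0
    have h1 : f^[m] (f x) = z := by
      rw [← Function.iterate_succ_apply, ← hm]
      exact htf_spec hf x
    have h2 : htf hf (f x) ≤ m := Nat.find_min' (hf.2 (f x)) h1
    omega

lemma isAcyclic_graphOf {f : S → S} (hf : IsRT z f) : (graphOf f).IsAcyclic := by
  intro v c hc
  have hv : v ∈ c.support := Walk.start_mem_support c
  obtain ⟨u, hu, hmax⟩ := Finset.exists_max_image c.support.toFinset (htf hf)
    ⟨v, List.mem_toFinset.2 hv⟩
  have hu' : u ∈ c.support := List.mem_toFinset.1 hu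
  have hc' := hc.rotate hu'
  have hsub : ∀ x ∈ (c.rotate u hu').support, x ∈ c.support := by
    intro x hx
    rw [Walk.rotate, Walk.support_append] at hx
    rcases List.mem_append.1 hx with h | h
    · exact Walk.support_dropUntil_subset _ _ h
    · exact Walk.support_takeUntil_subset _ _ (List.mem_of_mem_tail h)
  have hmax' : ∀ x ∈ (c.rotate u hu').support, htf hf x ≤ htf hf u := fun x hx =>
    hmax x (List.mem_toFinset.2 (hsub x hx))
  obtain ⟨b, hadjub, q, hq⟩ := Walk.not_nil_iff.1 hc'.isCircuit.not_nil
  have hb : b ∈ (c.rotate u hu').support := by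
    rw [hq, Walk.support_cons]
    exact List.mem_cons_of_mem _ (Walk.start_mem_support q)
  -- u ≠ z
  have huz : u ≠ z := by
    intro h
    have h0 : htf hf u = 0 := by rw [h]; exact (htf_eq_zero_iff hf).2 rfl
    have hbz : b = z := (htf_eq_zero_iff hf).1 (by have := hmax' b hb; omega)
    exact hadjub.ne (by rw [hbz, ← h])
  -- f u = b
  have hfub : f u = b := by
    rcases (graphOf_adj.1 hadjub).2 with h | h
    · exact h
    · exfalso
      have hbz : b ≠ z := fun hbz => huz (by rw [← hf.1, ← hbz, h])
      have := htf_apply hf hbz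
      rw [h] at this
      have := hmax' b hb
      omega
  -- last dart
  have hdne : (c.rotate u hu').darts ≠ [] := by
    have h3 := hc'.three_le_length
    have := Walk.length_darts (c.rotate u hu')
    intro h
    rw [h] at this
    simp only [List.length_nil] at this
    omega
  set d := (c.rotate u hu').darts.getLast hdne with hd
  have hdsnd : d.snd = u := by rw [hd, Walk.getLast_darts_eq_lastDart]; rfl
  have hdmem : d ∈ (c.rotate u hu').darts := List.getLast_mem hdne
  have hdfst : d.fst ∈ (c.rotate u hu').support :=
    Walk.dart_fst_mem_support_of_mem_darts _ hdmem
  have hdadj : (graphOf f).Adj d.fst u := hdsnd ▸ d.adj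
  have hfu2 : f u = d.fst := by
    rcases (graphOf_adj.1 hdadj).2 with h | h
    · exfalso
      have hwz : d.fst ≠ z := fun hwz => huz (by rw [← hf.1, ← hwz, h])
      have h2 := htf_apply hf hwz
      rw [h] at h2
      have := hmax' d.fst hdfst
      omega
    · exact h
  -- the two darts
  have hd0mem : (⟨(u, b), hadjub⟩ : (graphOf f).Dart) ∈ (c.rotate u hu').darts := by
    rw [hq, Walk.darts_cons]
    exact List.mem_cons_self
  have hedges : ((c.rotate u hu').darts.map SimpleGraph.Dart.edge).Nodup :=
    hc'.isCircuit.isTrail.edges_nodup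
  have heq : (⟨(u, b), hadjub⟩ : (graphOf f).Dart).edge = d.edge := by
    have : d.edge = s(d.fst, d.snd) := rfl
    rw [this, hdsnd, ← hfu2, hfub]
    exact Sym2.eq_swap
  have hne : (⟨(u, b), hadjub⟩ : (graphOf f).Dart) ≠ d := by
    intro h
    have : u = d.fst := congrArg (fun t => t.fst) h
    rw [← hfu2, hfub] at this
    exact hadjub.ne this
  exact hne (List.inj_on_of_nodup_map hedges hd0mem hdmem heq)

section Tree

variable {T : SimpleGraph S} {z : S}

noncomputable def pathTo (hT : T.IsTree) (z v : S) : T.Walk v z :=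
  (hT.existsUnique_path v z).choose

lemma pathTo_isPath (hT : T.IsTree) (z v : S) : (pathTo hT z v).IsPath :=
  (hT.existsUnique_path v z).choose_spec.1

lemma pathTo_unique (hT : T.IsTree) {v : S} {q : T.Walk v z} (hq : q.IsPath) :
    q = pathTo hT z v :=
  (hT.existsUnique_path v z).choose_spec.2 q hq

lemma pathTo_self (hT : T.IsTree) : pathTo hT z z = Walk.nil :=
  ((Walk.isPath_iff_eq_nil).1 (pathTo_isPath hT z z))

noncomputable def parentOf (hT : T.IsTree) (z : S) : S → S := fun v =>
  (pathTo hT z v).getVert 1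

lemma parentOf_self (hT : T.IsTree) : parentOf hT z z = z := by
  rw [parentOf]
  simp only [pathTo_self hT]
  exact Walk.getVert_of_length_le _ (by simp)

lemma pathTo_not_nil (hT : T.IsTree) {v : S} (hv : v ≠ z) : ¬(pathTo hT z v).Nil :=
  Walk.not_nil_of_ne hv

lemma parentOf_adj (hT : T.IsTree) {v : S} (hv : v ≠ z) : T.Adj v (parentOf hT z v) :=
  (pathTo hT z v).adj_snd (pathTo_not_nil hT hv)

lemma pathTo_parentOf (hT : T.IsTree) {v : S} (hv : v ≠ z) :
    pathTo hT z (parentOf hT z v) = (pathTo hT z v).tail :=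
  (pathTo_unique hT ((pathTo_isPath hT z v).tail)).symm

lemma parentOf_isRT (hT : T.IsTree) : IsRT z (parentOf hT z) := by
  refine ⟨parentOf_self hT, ?_⟩
  suffices H : ∀ (n : ℕ) (v : S), (pathTo hT z v).length = n → (parentOf hT z)^[n] v = z by
    exact fun v => ⟨_, H _ v rfl⟩
  intro n
  induction n with
  | zero =>
    intro v hv
    by_contra h
    have : v = z := by
      by_contra hvz
      exact (pathTo_not_nil hT hvz) (Walk.nil_iff_length_eq.2 hv)
    exact h (by simpa [this])
  | succ n ih =>
    intro v hv
    have hvz : v ≠ z := by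
      intro h
      subst h
      rw [pathTo_self hT] at hv
      simp at hv
    rw [Function.iterate_succ_apply]
    apply ih
    have := Walk.length_tail_add_one (pathTo_not_nil hT hvz)
    rw [pathTo_parentOf hT hvz]
    rw [← this] at hv
    exact Nat.succ_injective hv

lemma graphOf_parentOf (hT : T.IsTree) : graphOf (parentOf hT z) = T := by
  ext x y
  rw [graphOf_adj]
  constructor
  · rintro ⟨hne, h | h⟩
    · have hx : x ≠ z := by
        intro hx
        subst hx
        exact hne ((parentOf_self hT).symm.trans h)
      exact h ▸ parentOf_adj hT hx
    · have hy : y ≠ z := by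
        intro hy
        subst hy
        exact hne (h.symm.trans (parentOf_self hT))
      exact (h ▸ parentOf_adj hT hy).symm
  · intro hxy
    refine ⟨hxy.ne, ?_⟩
    by_cases hy : y ∈ (pathTo hT z x).support
    · left
      have hxney : x ≠ y := hxy.ne
      have hw : (Walk.cons hxy Walk.nil : T.Walk x y).IsPath := by
        simp [Walk.isPath_def, hxney]
      have hq : ((pathTo hT z x).takeUntil y hy).IsPath :=
        (pathTo_isPath hT z x).takeUntil hy
      obtain ⟨P, -, hPuniq⟩ := hT.existsUnique_path x y
      have hqw : (pathTo hT z x).takeUntil y hy = Walk.cons hxy Walk.nil :=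
        (hPuniq _ hq).trans (hPuniq _ hw).symm
      have hps := (pathTo hT z x).take_spec hy
      rw [hqw] at hps
      show (pathTo hT z x).getVert 1 = y
      rw [← hps]
      simp [Walk.getVert_cons_succ]
    · right
      have hw' : (Walk.cons hxy.symm (pathTo hT z x)).IsPath :=
        (Walk.cons_isPath_iff _ _).2 ⟨pathTo_isPath hT z x, hy⟩
      have := pathTo_unique hT hw'
      show (pathTo hT z y).getVert 1 = x
      rw [← this]
      simp [Walk.getVert_cons_succ]

lemma graphOf_inj {f g : S → S} (hf : IsRT z f) (hg : IsRT z g)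
    (h : graphOf f = graphOf g) : f = g := by
  suffices H : ∀ (n : ℕ) (v : S), htf hf v = n → f v = g v by
    funext v; exact H _ v rfl
  intro n
  induction n using Nat.strong_induction_on with
  | _ n ih =>
    intro v hv
    by_cases hvz : v = z
    · subst hvz
      rw [hf.1, hg.1]
    · have hadj : (graphOf f).Adj v (f v) :=
        graphOf_adj.2 ⟨(hf.apply_ne hvz).symm, Or.inl rfl⟩
      rw [h] at hadj
      rcases (graphOf_adj.1 hadj).2 with h2 | h2
      · exact h2.symm
      · exfalso
        have hlt : htf hf (f v) < n := by
          have := htf_apply hf hvz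
          omega
        have h3 : f (f v) = g (f v) := ih _ hlt (f v) rfl
        have h4 : f^[2] v = v := by
          have h5 : f^[2] v = f (f v) := by
            rw [Function.iterate_succ_apply', Function.iterate_one]
          rw [h5, h3, h2]
        exact hvz (hf.not_periodic (mk_mem_periodicPts two_pos h4))

noncomputable def treeEquiv (z : S) :
    {f : S → S // IsRT z f} ≃ {T : SimpleGraph S // T.IsTree} :=
  Equiv.ofBijective
    (fun f => ⟨graphOf f.1, ⟨connected_graphOf f.2, isAcyclic_graphOf f.2⟩⟩)
    ⟨fun f g hfg => Subtype.ext (graphOf_inj f.2 g.2 (congrArg Subtype.val hfg)),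
     fun T => ⟨⟨parentOf T.2 z, parentOf_isRT T.2⟩, Subtype.ext (graphOf_parentOf T.2)⟩⟩

end Tree

end Graph

end CayleyAux


/-- **Cayley's formula.** The number of spanning trees of the complete graph on `p ≥ 1`
labeled vertices (i.e. of trees on the vertex set `Fin p`) is `p ^ (p - 2)`. -/
theorem cayley_formula (p : ℕ) (hp : 1 ≤ p) :
    Nat.card {T : SimpleGraph (Fin p) // T.IsTree} = p ^ (p - 2) := by
  have hne : Nonempty (Fin p) := ⟨⟨0, hp⟩⟩
  set z : Fin p := ⟨0, hp⟩
  have h1 : Nat.card {T : SimpleGraph (Fin p) // T.IsTree}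
      = Nat.card {f : Fin p → Fin p // CayleyAux.IsRT z f} :=
    (Nat.card_congr (CayleyAux.treeEquiv z)).symm
  have h2 := CayleyAux.card_isRT (S := Fin p) z
  rw [Fintype.card_fin] at h2
  rw [h1]
  set N := Nat.card {f : Fin p → Fin p // CayleyAux.IsRT z f} with hN
  rcases Nat.lt_or_ge p 2 with h | h
  · have hp1 : p = 1 := by omega
    subst hp1
    simpa using h2
  · have hpeq : p = (p - 2) + 2 := by omega
    have hpow : p ^ p = p * (p * p ^ (p - 2)) := by
      calc p ^ p = p ^ ((p - 2) + 2) := by rw [← hpeq]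
        _ = p ^ (p - 2) * p ^ 2 := pow_add p _ 2
        _ = p * (p * p ^ (p - 2)) := by ring
    have h3 := h2.trans hpow
    have hppos : 0 < p := hp
    exact Nat.eq_of_mul_eq_mul_left hppos (Nat.eq_of_mul_eq_mul_left hppos h3)
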